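/- Let (V; M0,...,M4; c) be a Higmanian matrix configuration with valencies ni = c(i,i,0). Suppose c(3,3,3) = c(3,3,4) and (as rational numbers) 1/n3 + 1/n4 = 1/n1 − 1/(n1+1). Then for each i ∈ {3,4}, the matrix A = M2 + Mi is the adjacency matrix of a divisible design graph with class matrix P = N1 = M0+M1+M2 and parameters v = 1+n1+n2+n3+n4, k = n2+ni, λ1 = n2 + ni·(n1·ni − n_{7−i})/(n1·(n3+n4)), λ2 = 2·n2·ni/(n3+n4) + ni^2·(n3+n4−n2−n1−1)/(n3+n4)^2, m = 1 + (n3+n4)/(1+n1+n2), n = 1+n1+n2; in particular λ1, λ2 and m are nonnegative integers and A^2 = k•I + λ1•(N1−I) + λ2•(J−N1). -/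
import Mathlib


open Matrix Finset

/-- A *Higmanian matrix configuration* on a nonempty finite set `V`:
five nonzero symmetric `{0,1}`-matrices `M 0, …, M 4` over `ℤ` summing to the all-ones
matrix, with `M 0 = I`, structure constants `c`, parabolic conditions for
`N0 = M0 + M1` and `N1 = M0 + M1 + M2`, standard ordering `n3 ≤ n4`, and triviality of
the radicals of `M 3` and `M 4`. -/
structure HigmanianConfig (V : Type*) [Fintype V] [DecidableEq V] : Type _ where
  nonempty : Nonempty V
  M : Fin 5 → Matrix V V ℤ
  c : Fin 5 → Fin 5 → Fin 5 → ℕ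
  M_ne_zero : ∀ i, M i ≠ 0
  M_symm : ∀ i, (M i)ᵀ = M i
  M_entries : ∀ i x y, M i x y = 0 ∨ M i x y = 1
  M_zero : M 0 = 1
  sum_M : M 0 + M 1 + M 2 + M 3 + M 4 = Matrix.of fun _ _ => 1
  mul_M : ∀ i j, M i * M j = ∑ k : Fin 5, (c i j k : ℤ) • M k
  N0_sq : (M 0 + M 1) * (M 0 + M 1) = ((1 + c 1 1 0 : ℕ) : ℤ) • (M 0 + M 1)
  N1_sq : (M 0 + M 1 + M 2) * (M 0 + M 1 + M 2)
      = ((1 + c 1 1 0 + c 2 2 0 : ℕ) : ℤ) • (M 0 + M 1 + M 2)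
  N1_ne_J : M 0 + M 1 + M 2 ≠ Matrix.of fun _ _ => 1
  n3_le_n4 : c 3 3 0 ≤ c 4 4 0
  radical : ∀ j ∈ ({3, 4} : Finset (Fin 5)), ∀ T : Finset (Fin 5),
    T.Nonempty → T ⊆ ({1, 2, 3, 4} : Finset (Fin 5)) →
    ¬ ((1 + ∑ t ∈ T, M t) * (1 + ∑ t ∈ T, M t)
          = (1 + ∑ t ∈ T, (c t t 0 : ℤ)) • (1 + ∑ t ∈ T, M t)
        ∧ (1 + ∑ t ∈ T, M t) * M j = (1 + ∑ t ∈ T, (c t t 0 : ℤ)) • M j)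

/-- The valency `nᵢ = c i i 0` of the `i`-th basis matrix. -/
def HigmanianConfig.n {V : Type*} [Fintype V] [DecidableEq V]
    (X : HigmanianConfig V) (i : Fin 5) : ℕ := X.c i i 0

namespace HigmanianConfig

variable {V : Type*} [Fintype V] [DecidableEq V] (X : HigmanianConfig V)

lemma sum_entries (x y : V) :
    X.M 0 x y + X.M 1 x y + X.M 2 x y + X.M 3 x y + X.M 4 x y = 1 := by
  have := congrFun (congrFun X.sum_M x) y
  simpa using this

lemma entry_disj {i j : Fin 5} (h : i ≠ j) {x y : V} (hx : X.M i x y = 1) :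
    X.M j x y = 0 := by
  have hs := X.sum_entries x y
  have h0 := X.M_entries 0 x y
  have h1 := X.M_entries 1 x y
  have h2 := X.M_entries 2 x y
  have h3 := X.M_entries 3 x y
  have h4 := X.M_entries 4 x y
  fin_cases i <;> fin_cases j <;> simp_all <;> omega

lemma exists_entry_one (k : Fin 5) : ∃ x y, X.M k x y = 1 := by
  have h := X.M_ne_zero k
  by_contra hc
  push_neg at hc
  apply h
  ext x y
  rcases X.M_entries k x y with h0 | h1
  · simpa using h0
  · exact absurd h1 (hc x y)

lemma eval_at (a0 a1 a2 a3 a4 : ℤ) (x y : V) :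
    (a0 • X.M 0 + a1 • X.M 1 + a2 • X.M 2 + a3 • X.M 3 + a4 • X.M 4) x y
      = a0 * X.M 0 x y + a1 * X.M 1 x y + a2 * X.M 2 x y + a3 * X.M 3 x y
        + a4 * X.M 4 x y := by
  simp only [Matrix.add_apply, Matrix.smul_apply, smul_eq_mul]

lemma coeff5 {a0 a1 a2 a3 a4 b0 b1 b2 b3 b4 : ℤ}
    (h : a0 • X.M 0 + a1 • X.M 1 + a2 • X.M 2 + a3 • X.M 3 + a4 • X.M 4
       = b0 • X.M 0 + b1 • X.M 1 + b2 • X.M 2 + b3 • X.M 3 + b4 • X.M 4) :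
    a0 = b0 ∧ a1 = b1 ∧ a2 = b2 ∧ a3 = b3 ∧ a4 = b4 := by
  have key : ∀ k : Fin 5, ∀ x y : V, X.M k x y = 1 →
      a0 * X.M 0 x y + a1 * X.M 1 x y + a2 * X.M 2 x y + a3 * X.M 3 x y + a4 * X.M 4 x y
      = b0 * X.M 0 x y + b1 * X.M 1 x y + b2 * X.M 2 x y + b3 * X.M 3 x y
        + b4 * X.M 4 x y := by
    intro k x y _
    rw [← X.eval_at, ← X.eval_at, h]
  refine ⟨?_, ?_, ?_, ?_, ?_⟩
  · obtain ⟨x, y, hx⟩ := X.exists_entry_one 0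
    have := key 0 x y hx
    rw [hx, X.entry_disj (show (0:Fin 5) ≠ 1 by decide) hx,
      X.entry_disj (show (0:Fin 5) ≠ 2 by decide) hx,
      X.entry_disj (show (0:Fin 5) ≠ 3 by decide) hx,
      X.entry_disj (show (0:Fin 5) ≠ 4 by decide) hx] at this
    linarith
  · obtain ⟨x, y, hx⟩ := X.exists_entry_one 1
    have := key 1 x y hx
    rw [hx, X.entry_disj (show (1:Fin 5) ≠ 0 by decide) hx,
      X.entry_disj (show (1:Fin 5) ≠ 2 by decide) hx,
      X.entry_disj (show (1:Fin 5) ≠ 3 by decide) hx,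
      X.entry_disj (show (1:Fin 5) ≠ 4 by decide) hx] at this
    linarith
  · obtain ⟨x, y, hx⟩ := X.exists_entry_one 2
    have := key 2 x y hx
    rw [hx, X.entry_disj (show (2:Fin 5) ≠ 0 by decide) hx,
      X.entry_disj (show (2:Fin 5) ≠ 1 by decide) hx,
      X.entry_disj (show (2:Fin 5) ≠ 3 by decide) hx,
      X.entry_disj (show (2:Fin 5) ≠ 4 by decide) hx] at this
    linarith
  · obtain ⟨x, y, hx⟩ := X.exists_entry_one 3
    have := key 3 x y hx
    rw [hx, X.entry_disj (show (3:Fin 5) ≠ 0 by decide) hx,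
      X.entry_disj (show (3:Fin 5) ≠ 1 by decide) hx,
      X.entry_disj (show (3:Fin 5) ≠ 2 by decide) hx,
      X.entry_disj (show (3:Fin 5) ≠ 4 by decide) hx] at this
    linarith
  · obtain ⟨x, y, hx⟩ := X.exists_entry_one 4
    have := key 4 x y hx
    rw [hx, X.entry_disj (show (4:Fin 5) ≠ 0 by decide) hx,
      X.entry_disj (show (4:Fin 5) ≠ 1 by decide) hx,
      X.entry_disj (show (4:Fin 5) ≠ 2 by decide) hx,
      X.entry_disj (show (4:Fin 5) ≠ 3 by decide) hx] at this
    linarith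



lemma entry_nonneg (i : Fin 5) (x y : V) : 0 ≤ X.M i x y := by
  rcases X.M_entries i x y with h | h <;> omega

lemma symm_apply (i : Fin 5) (x y : V) : X.M i y x = X.M i x y :=
  congrFun (congrFun (X.M_symm i) x) y

lemma M0_mul (A : Matrix V V ℤ) : X.M 0 * A = A := by rw [X.M_zero, one_mul]

lemma mul_M0 (A : Matrix V V ℤ) : A * X.M 0 = A := by rw [X.M_zero, mul_one]

lemma mulM5 (i j : Fin 5) :
    X.M i * X.M j = (X.c i j 0 : ℤ) • X.M 0 + (X.c i j 1 : ℤ) • X.M 1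
      + (X.c i j 2 : ℤ) • X.M 2 + (X.c i j 3 : ℤ) • X.M 3 + (X.c i j 4 : ℤ) • X.M 4 := by
  rw [X.mul_M, Fin.sum_univ_five]

lemma mul_comm' (i j : Fin 5) : X.M i * X.M j = X.M j * X.M i := by
  have h1 : (X.M i * X.M j)ᵀ = X.M j * X.M i := by
    rw [Matrix.transpose_mul, X.M_symm, X.M_symm]
  have h2 : (X.M i * X.M j)ᵀ = X.M i * X.M j := by
    ext x y
    rw [Matrix.transpose_apply]
    rw [X.mul_M]
    simp only [Matrix.sum_apply, Matrix.smul_apply, smul_eq_mul]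
    exact Finset.sum_congr rfl fun k _ => by rw [X.symm_apply]
  rw [← h2, h1]

lemma diag_one (x : V) : X.M 0 x x = 1 := by rw [X.M_zero]; simp

lemma diag_zero {k : Fin 5} (hk : k ≠ 0) (x : V) : X.M k x x = 0 :=
  X.entry_disj (Ne.symm hk) (X.diag_one x)

lemma rowsum (i : Fin 5) (x : V) : ∑ z, X.M i x z = (X.c i i 0 : ℤ) := by
  have h := congrFun (congrFun (X.mul_M i i) x) x
  rw [Matrix.mul_apply, Fin.sum_univ_five] at h
  simp only [Matrix.add_apply, Matrix.smul_apply, smul_eq_mul] at h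
  rw [X.diag_one, X.diag_zero (show (1:Fin 5) ≠ 0 by decide),
    X.diag_zero (show (2:Fin 5) ≠ 0 by decide),
    X.diag_zero (show (3:Fin 5) ≠ 0 by decide),
    X.diag_zero (show (4:Fin 5) ≠ 0 by decide)] at h
  have key : ∀ z, X.M i x z * X.M i z x = X.M i x z := by
    intro z
    rw [X.symm_apply i x z]
    rcases X.M_entries i x z with h' | h' <;> rw [h'] <;> ring
  calc ∑ z, X.M i x z = ∑ z, X.M i x z * X.M i z x := by
        exact Finset.sum_congr rfl fun z _ => (key z).symm
    _ = (X.c i i 0 : ℤ) := by rw [h]; ring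

lemma c_diag_zero {i j : Fin 5} (hij : i ≠ j) : (X.c i j 0 : ℤ) = 0 := by
  obtain ⟨x⟩ := X.nonempty
  have h := congrFun (congrFun (X.mul_M i j) x) x
  rw [Matrix.mul_apply, Fin.sum_univ_five] at h
  simp only [Matrix.add_apply, Matrix.smul_apply, smul_eq_mul] at h
  rw [X.diag_one, X.diag_zero (show (1:Fin 5) ≠ 0 by decide),
    X.diag_zero (show (2:Fin 5) ≠ 0 by decide),
    X.diag_zero (show (3:Fin 5) ≠ 0 by decide),
    X.diag_zero (show (4:Fin 5) ≠ 0 by decide)] at h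
  have key : ∀ z, X.M i x z * X.M j z x = 0 := by
    intro z
    rw [X.symm_apply j x z]
    rcases X.M_entries i x z with h' | h'
    · rw [h']; ring
    · rw [h', X.entry_disj hij h']; ring
  rw [Finset.sum_congr rfl fun z _ => key z] at h
  simpa using h.symm

lemma n_pos (i : Fin 5) : 1 ≤ (X.c i i 0 : ℤ) := by
  obtain ⟨x, y, hxy⟩ := X.exists_entry_one i
  rw [← X.rowsum i x]
  calc (1:ℤ) = X.M i x y := hxy.symm
    _ ≤ ∑ z, X.M i x z :=
        Finset.single_le_sum (fun z _ => X.entry_nonneg i x z) (Finset.mem_univ y)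

lemma mul_J (i : Fin 5) :
    X.M i * (Matrix.of fun _ _ => (1:ℤ)) = (X.c i i 0 : ℤ) • Matrix.of fun _ _ => (1:ℤ) := by
  ext x y
  rw [Matrix.mul_apply, Matrix.smul_apply]
  simp only [Matrix.of_apply, mul_one, smul_eq_mul]
  rw [X.rowsum i x]

lemma J_mul (i : Fin 5) :
    (Matrix.of fun _ _ => (1:ℤ)) * X.M i = (X.c i i 0 : ℤ) • Matrix.of fun _ _ => (1:ℤ) := by
  ext x y
  rw [Matrix.mul_apply, Matrix.smul_apply]
  simp only [Matrix.of_apply, one_mul, smul_eq_mul]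
  have hz : ∀ z, X.M i z y = X.M i y z := fun z => X.symm_apply i y z
  rw [Finset.sum_congr rfl fun z _ => hz z, X.rowsum i y]; ring



lemma c_comm (i j k : Fin 5) : (X.c i j k : ℤ) = (X.c j i k : ℤ) := by
  have h := X.mul_comm' i j
  rw [X.mulM5 i j, X.mulM5 j i] at h
  obtain ⟨e0, e1, e2, e3, e4⟩ := X.coeff5 h
  fin_cases k <;> assumption

/-- `M1 * M1 = n1 • M0 + (n1-1) • M1`. -/
lemma M1_sq : X.M 1 * X.M 1
    = (X.c 1 1 0 : ℤ) • X.M 0 + ((X.c 1 1 0 : ℤ) - 1) • X.M 1 := by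
  have h := X.N0_sq
  have hexp : (X.M 0 + X.M 1) * (X.M 0 + X.M 1)
      = X.M 0 * X.M 0 + X.M 0 * X.M 1 + X.M 1 * X.M 0 + X.M 1 * X.M 1 := by noncomm_ring
  rw [hexp, X.M0_mul, X.M0_mul, X.mul_M0] at h
  push_cast at h
  have h2 : X.M 1 * X.M 1
      = (1 + (X.c 1 1 0 : ℤ)) • (X.M 0 + X.M 1) - X.M 0 - X.M 1 - X.M 1 := by
    rw [← h]; abel
  rw [h2]; module

/-- Coefficient equations from `N1²`: `2 c12k + c22k = …`. -/
lemma N1_coeffs :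
    2 * (X.c 1 2 1 : ℤ) + (X.c 2 2 1 : ℤ) = (X.c 2 2 0 : ℤ)
    ∧ 2 * (X.c 1 2 2 : ℤ) + (X.c 2 2 2 : ℤ) = (X.c 1 1 0 : ℤ) + (X.c 2 2 0 : ℤ) - 1
    ∧ (X.c 1 2 3 : ℤ) = 0 ∧ (X.c 1 2 4 : ℤ) = 0
    ∧ (X.c 2 2 3 : ℤ) = 0 ∧ (X.c 2 2 4 : ℤ) = 0 := by
  have h := X.N1_sq
  have hexp : (X.M 0 + X.M 1 + X.M 2) * (X.M 0 + X.M 1 + X.M 2)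
      = X.M 0 * X.M 0 + X.M 0 * X.M 1 + X.M 0 * X.M 2 + X.M 1 * X.M 0
        + X.M 2 * X.M 0 + X.M 1 * X.M 1 + (X.M 1 * X.M 2 + X.M 2 * X.M 1)
        + X.M 2 * X.M 2 := by noncomm_ring
  rw [hexp, X.M0_mul, X.M0_mul, X.M0_mul, X.mul_M0, X.mul_M0, X.M1_sq,
    X.mul_comm' 2 1, X.mulM5 1 2, X.mulM5 2 2] at h
  push_cast at h
  rw [X.c_diag_zero (show (1:Fin 5) ≠ 2 by decide)] at h
  have h2 : ((X.c 1 1 0 : ℤ) + (X.c 2 2 0 : ℤ) + 1) • X.M 0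
        + ((X.c 1 1 0 : ℤ) + 1 + 2 * (X.c 1 2 1 : ℤ) + (X.c 2 2 1 : ℤ)) • X.M 1
        + (2 + 2 * (X.c 1 2 2 : ℤ) + (X.c 2 2 2 : ℤ)) • X.M 2
        + (2 * (X.c 1 2 3 : ℤ) + (X.c 2 2 3 : ℤ)) • X.M 3
        + (2 * (X.c 1 2 4 : ℤ) + (X.c 2 2 4 : ℤ)) • X.M 4
      = (1 + (X.c 1 1 0 : ℤ) + (X.c 2 2 0 : ℤ)) • X.M 0
        + (1 + (X.c 1 1 0 : ℤ) + (X.c 2 2 0 : ℤ)) • X.M 1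
        + (1 + (X.c 1 1 0 : ℤ) + (X.c 2 2 0 : ℤ)) • X.M 2
        + (0 : ℤ) • X.M 3 + (0 : ℤ) • X.M 4 := by
    calc ((X.c 1 1 0 : ℤ) + (X.c 2 2 0 : ℤ) + 1) • X.M 0
        + ((X.c 1 1 0 : ℤ) + 1 + 2 * (X.c 1 2 1 : ℤ) + (X.c 2 2 1 : ℤ)) • X.M 1
        + (2 + 2 * (X.c 1 2 2 : ℤ) + (X.c 2 2 2 : ℤ)) • X.M 2
        + (2 * (X.c 1 2 3 : ℤ) + (X.c 2 2 3 : ℤ)) • X.M 3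
        + (2 * (X.c 1 2 4 : ℤ) + (X.c 2 2 4 : ℤ)) • X.M 4
        = X.M 0 + X.M 1 + X.M 2 + X.M 1 + X.M 2
            + ((X.c 1 1 0 : ℤ) • X.M 0 + ((X.c 1 1 0 : ℤ) - 1) • X.M 1)
            + ((0:ℤ) • X.M 0 + (X.c 1 2 1 : ℤ) • X.M 1 + (X.c 1 2 2 : ℤ) • X.M 2
                + (X.c 1 2 3 : ℤ) • X.M 3 + (X.c 1 2 4 : ℤ) • X.M 4
              + ((0:ℤ) • X.M 0 + (X.c 1 2 1 : ℤ) • X.M 1 + (X.c 1 2 2 : ℤ) • X.M 2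
                + (X.c 1 2 3 : ℤ) • X.M 3 + (X.c 1 2 4 : ℤ) • X.M 4))
            + ((X.c 2 2 0 : ℤ) • X.M 0 + (X.c 2 2 1 : ℤ) • X.M 1 + (X.c 2 2 2 : ℤ) • X.M 2
                + (X.c 2 2 3 : ℤ) • X.M 3 + (X.c 2 2 4 : ℤ) • X.M 4) := by module
      _ = (1 + (X.c 1 1 0 : ℤ) + (X.c 2 2 0 : ℤ)) • (X.M 0 + X.M 1 + X.M 2) := h
      _ = _ := by module
  obtain ⟨e0, e1, e2, e3, e4⟩ := X.coeff5 h2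
  have hn3 : (0:ℤ) ≤ (X.c 1 2 3 : ℤ) := Int.natCast_nonneg _
  have hn3' : (0:ℤ) ≤ (X.c 2 2 3 : ℤ) := Int.natCast_nonneg _
  have hn4 : (0:ℤ) ≤ (X.c 1 2 4 : ℤ) := Int.natCast_nonneg _
  have hn4' : (0:ℤ) ≤ (X.c 2 2 4 : ℤ) := Int.natCast_nonneg _
  refine ⟨by linarith, by linarith, by linarith, by linarith, by linarith, by linarith⟩



set_option maxHeartbeats 1000000

lemma c12_vals : (X.c 1 2 1 : ℤ) = 0 ∧ (X.c 1 2 2 : ℤ) = (X.c 1 1 0 : ℤ) := by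
  obtain ⟨F1, F2, hc123, hc124, hc223, hc224⟩ := X.N1_coeffs
  set α := (X.c 1 2 1 : ℤ) with hα
  set β := (X.c 1 2 2 : ℤ) with hβ
  set n1 := (X.c 1 1 0 : ℤ) with hn1
  set n2 := (X.c 2 2 0 : ℤ) with hn2
  have hM12 : X.M 1 * X.M 2 = α • X.M 1 + β • X.M 2 := by
    rw [X.mulM5 1 2, X.c_diag_zero (show (1:Fin 5) ≠ 2 by decide), hc123, hc124]
    module
  have hM21 : X.M 2 * X.M 1 = α • X.M 1 + β • X.M 2 := by
    rw [X.mul_comm' 2 1]; exact hM12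
  have hM22 : X.M 2 * X.M 2 = n2 • X.M 0 + (X.c 2 2 1 : ℤ) • X.M 1
      + (X.c 2 2 2 : ℤ) • X.M 2 := by
    rw [X.mulM5 2 2, hc223, hc224]; module
  have hN1 : (X.M 0 + X.M 1 + X.M 2) * (X.M 0 + X.M 1 + X.M 2)
      = (1 + n1 + n2) • (X.M 0 + X.M 1 + X.M 2) := by
    have := X.N1_sq; push_cast at this; exact this
  have hZ : X.M 1 * (X.M 0 + X.M 1 + X.M 2)
      = n1 • X.M 0 + (n1 + α) • X.M 1 + β • X.M 2 := by
    rw [mul_add, mul_add, X.mul_M0, X.M1_sq, hM12]; module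
  have hW : X.M 2 * (X.M 0 + X.M 1 + X.M 2)
      = n2 • X.M 0 + ((X.c 2 2 1 : ℤ) + α) • X.M 1
        + (1 + β + (X.c 2 2 2 : ℤ)) • X.M 2 := by
    rw [mul_add, mul_add, X.mul_M0, hM21, hM22]; module
  have assoc : (X.M 1 * (X.M 0 + X.M 1 + X.M 2)) * (X.M 0 + X.M 1 + X.M 2)
      = (1 + n1 + n2) • (X.M 1 * (X.M 0 + X.M 1 + X.M 2)) := by
    rw [mul_assoc, hN1, mul_smul_comm]
  rw [hZ] at assoc
  have lhs : (n1 • X.M 0 + (n1 + α) • X.M 1 + β • X.M 2) * (X.M 0 + X.M 1 + X.M 2)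
      = n1 • (X.M 0 + X.M 1 + X.M 2) + (n1 + α) • (X.M 1 * (X.M 0 + X.M 1 + X.M 2))
        + β • (X.M 2 * (X.M 0 + X.M 1 + X.M 2)) := by
    rw [add_mul, add_mul, smul_mul_assoc, smul_mul_assoc, smul_mul_assoc, X.M0_mul]
  rw [lhs, hZ, hW] at assoc
  have h2 : (n1 + (n1 + α) * n1 + β * n2) • X.M 0
        + (n1 + (n1 + α) * (n1 + α) + β * ((X.c 2 2 1 : ℤ) + α)) • X.M 1
        + (n1 + (n1 + α) * β + β * (1 + β + (X.c 2 2 2 : ℤ))) • X.M 2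
        + (0:ℤ) • X.M 3 + (0:ℤ) • X.M 4
      = ((1 + n1 + n2) * n1) • X.M 0 + ((1 + n1 + n2) * (n1 + α)) • X.M 1
        + ((1 + n1 + n2) * β) • X.M 2 + (0:ℤ) • X.M 3 + (0:ℤ) • X.M 4 := by
    calc (n1 + (n1 + α) * n1 + β * n2) • X.M 0
        + (n1 + (n1 + α) * (n1 + α) + β * ((X.c 2 2 1 : ℤ) + α)) • X.M 1
        + (n1 + (n1 + α) * β + β * (1 + β + (X.c 2 2 2 : ℤ))) • X.M 2
        + (0:ℤ) • X.M 3 + (0:ℤ) • X.M 4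
        = n1 • (X.M 0 + X.M 1 + X.M 2)
            + (n1 + α) • (n1 • X.M 0 + (n1 + α) • X.M 1 + β • X.M 2)
            + β • (n2 • X.M 0 + ((X.c 2 2 1 : ℤ) + α) • X.M 1
              + (1 + β + (X.c 2 2 2 : ℤ)) • X.M 2) := by module
      _ = (1 + n1 + n2) • (n1 • X.M 0 + (n1 + α) • X.M 1 + β • X.M 2) := assoc
      _ = _ := by module
  obtain ⟨E0, E1, E2, -, -⟩ := X.coeff5 h2
  -- substitute c221 = n2 - 2α, c222 = n1 + n2 - 1 - 2β
  have hc221 : (X.c 2 2 1 : ℤ) = n2 - 2 * α := by linarith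
  have hc222 : (X.c 2 2 2 : ℤ) = n1 + n2 - 1 - 2 * β := by linarith
  rw [hc221] at E1
  rw [hc222] at E2
  have hαnn : 0 ≤ α := Int.natCast_nonneg _
  have hβnn : 0 ≤ β := Int.natCast_nonneg _
  have hn1p : 1 ≤ n1 := X.n_pos 1
  have hn2p : 1 ≤ n2 := X.n_pos 2
  -- E0 : n1 + (n1+α)*n1 + β*n2 = (1+n1+n2)*n1
  have E0' : n1 * α + β * n2 = n1 * n2 := by linear_combination E0
  have E1' : α * (α - β - 1 - n2) = 0 := by linear_combination E1 - E0
  have E2' : β * (β + 1 - n1 - α) = n1 := by linear_combination -E2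
  have hA : α = 0 := by
    by_contra hne
    have h1 : α - β - 1 - n2 = 0 := by
      rcases mul_eq_zero.mp E1' with h | h
      · exact absurd h hne
      · exact h
    have hb1 : 1 ≤ β := by
      rcases eq_or_lt_of_le hβnn with h | h
      · rw [← h] at E2'; simp at E2'; linarith
      · linarith
    have hf : 1 ≤ β + 1 - n1 - α := by
      by_contra hcon
      push_neg at hcon
      have hle : β * (β + 1 - n1 - α) ≤ 0 :=
        mul_nonpos_of_nonneg_of_nonpos hβnn (by linarith)
      linarith
    linarith
  refine ⟨hA, ?_⟩
  rw [hA] at E0'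
  have : (β - n1) * n2 = 0 := by linear_combination E0'
  rcases mul_eq_zero.mp this with h | h
  · linarith
  · linarith

lemma c221_eq : (X.c 2 2 1 : ℤ) = (X.c 2 2 0 : ℤ) := by
  obtain ⟨F1, -, -, -, -, -⟩ := X.N1_coeffs
  obtain ⟨h1, -⟩ := X.c12_vals
  linarith

lemma c222_eq : (X.c 2 2 2 : ℤ) = (X.c 2 2 0 : ℤ) - (X.c 1 1 0 : ℤ) - 1 := by
  obtain ⟨-, F2, -, -, -, -⟩ := X.N1_coeffs
  obtain ⟨-, h2⟩ := X.c12_vals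
  linarith

lemma M1_M2 : X.M 1 * X.M 2 = (X.c 1 1 0 : ℤ) • X.M 2 := by
  obtain ⟨h1, h2⟩ := X.c12_vals
  obtain ⟨-, -, hc123, hc124, -, -⟩ := X.N1_coeffs
  rw [X.mulM5 1 2, X.c_diag_zero (show (1:Fin 5) ≠ 2 by decide), h1, h2, hc123, hc124]
  module

lemma M2_sq : X.M 2 * X.M 2 = (X.c 2 2 0 : ℤ) • X.M 0 + (X.c 2 2 0 : ℤ) • X.M 1
    + ((X.c 2 2 0 : ℤ) - (X.c 1 1 0 : ℤ) - 1) • X.M 2 := by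
  obtain ⟨-, -, -, -, hc223, hc224⟩ := X.N1_coeffs
  rw [X.mulM5 2 2, X.c221_eq, X.c222_eq, hc223, hc224]
  module



set_option maxHeartbeats 1000000

lemma M1_N1 : X.M 1 * (X.M 0 + X.M 1 + X.M 2)
    = (X.c 1 1 0 : ℤ) • (X.M 0 + X.M 1 + X.M 2) := by
  rw [mul_add, mul_add, X.mul_M0, X.M1_sq, X.M1_M2]; module

lemma M2_N1 : X.M 2 * (X.M 0 + X.M 1 + X.M 2)
    = (X.c 2 2 0 : ℤ) • (X.M 0 + X.M 1 + X.M 2) := by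
  rw [mul_add, mul_add, X.mul_M0, X.mul_comm' 2 1, X.M1_M2, X.M2_sq]; module

/-- cross coefficients: `M1 * (M3 + M4) = n1 • (M3 + M4)`. -/
lemma cross1 : (X.c 1 3 1 : ℤ) = 0 ∧ (X.c 1 3 2 : ℤ) = 0
    ∧ (X.c 1 4 1 : ℤ) = 0 ∧ (X.c 1 4 2 : ℤ) = 0
    ∧ (X.c 1 3 3 : ℤ) + (X.c 1 4 3 : ℤ) = (X.c 1 1 0 : ℤ)
    ∧ (X.c 1 3 4 : ℤ) + (X.c 1 4 4 : ℤ) = (X.c 1 1 0 : ℤ) := by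
  have hJ : X.M 1 * (Matrix.of fun _ _ => (1:ℤ))
      = (X.c 1 1 0 : ℤ) • Matrix.of fun _ _ => (1:ℤ) := X.mul_J 1
  rw [← X.sum_M] at hJ
  have h34 : X.M 1 * X.M 3 + X.M 1 * X.M 4
      = (X.c 1 1 0 : ℤ) • (X.M 3 + X.M 4) := by
    have expand : X.M 1 * (X.M 0 + X.M 1 + X.M 2 + X.M 3 + X.M 4)
        = X.M 1 * (X.M 0 + X.M 1 + X.M 2) + (X.M 1 * X.M 3 + X.M 1 * X.M 4) := by
      noncomm_ring
    rw [expand, X.M1_N1] at hJ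
    have : (X.c 1 1 0 : ℤ) • ((X.M 0 + X.M 1 + X.M 2) + (X.M 3 + X.M 4))
        = (X.c 1 1 0 : ℤ) • (X.M 0 + X.M 1 + X.M 2)
          + (X.c 1 1 0 : ℤ) • (X.M 3 + X.M 4) := by module
    have h2 : (X.c 1 1 0 : ℤ) • (X.M 0 + X.M 1 + X.M 2) + (X.M 1 * X.M 3 + X.M 1 * X.M 4)
        = (X.c 1 1 0 : ℤ) • (X.M 0 + X.M 1 + X.M 2)
          + (X.c 1 1 0 : ℤ) • (X.M 3 + X.M 4) := by
      rw [hJ]; module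
    exact add_left_cancel h2
  rw [X.mulM5 1 3, X.mulM5 1 4,
    X.c_diag_zero (show (1:Fin 5) ≠ 3 by decide),
    X.c_diag_zero (show (1:Fin 5) ≠ 4 by decide)] at h34
  have h2 : ((0:ℤ) + 0) • X.M 0 + ((X.c 1 3 1 : ℤ) + (X.c 1 4 1 : ℤ)) • X.M 1
      + ((X.c 1 3 2 : ℤ) + (X.c 1 4 2 : ℤ)) • X.M 2
      + ((X.c 1 3 3 : ℤ) + (X.c 1 4 3 : ℤ)) • X.M 3
      + ((X.c 1 3 4 : ℤ) + (X.c 1 4 4 : ℤ)) • X.M 4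
      = (0:ℤ) • X.M 0 + (0:ℤ) • X.M 1 + (0:ℤ) • X.M 2
        + (X.c 1 1 0 : ℤ) • X.M 3 + (X.c 1 1 0 : ℤ) • X.M 4 := by
    calc _ = (0:ℤ) • X.M 0 + (X.c 1 3 1 : ℤ) • X.M 1 + (X.c 1 3 2 : ℤ) • X.M 2
          + (X.c 1 3 3 : ℤ) • X.M 3 + (X.c 1 3 4 : ℤ) • X.M 4
          + ((0:ℤ) • X.M 0 + (X.c 1 4 1 : ℤ) • X.M 1 + (X.c 1 4 2 : ℤ) • X.M 2
            + (X.c 1 4 3 : ℤ) • X.M 3 + (X.c 1 4 4 : ℤ) • X.M 4) := by module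
      _ = (X.c 1 1 0 : ℤ) • (X.M 3 + X.M 4) := h34
      _ = _ := by module
  obtain ⟨-, e1, e2, e3, e4⟩ := X.coeff5 h2
  have a1 : (0:ℤ) ≤ (X.c 1 3 1 : ℤ) := Int.natCast_nonneg _
  have a2 : (0:ℤ) ≤ (X.c 1 4 1 : ℤ) := Int.natCast_nonneg _
  have a3 : (0:ℤ) ≤ (X.c 1 3 2 : ℤ) := Int.natCast_nonneg _
  have a4 : (0:ℤ) ≤ (X.c 1 4 2 : ℤ) := Int.natCast_nonneg _
  exact ⟨by linarith, by linarith, by linarith, by linarith, e3, e4⟩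

/-- cross coefficients: `M2 * (M3 + M4) = n2 • (M3 + M4)`. -/
lemma cross2 : (X.c 2 3 1 : ℤ) = 0 ∧ (X.c 2 3 2 : ℤ) = 0
    ∧ (X.c 2 4 1 : ℤ) = 0 ∧ (X.c 2 4 2 : ℤ) = 0
    ∧ (X.c 2 3 3 : ℤ) + (X.c 2 4 3 : ℤ) = (X.c 2 2 0 : ℤ)
    ∧ (X.c 2 3 4 : ℤ) + (X.c 2 4 4 : ℤ) = (X.c 2 2 0 : ℤ) := by
  have hJ : X.M 2 * (Matrix.of fun _ _ => (1:ℤ))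
      = (X.c 2 2 0 : ℤ) • Matrix.of fun _ _ => (1:ℤ) := X.mul_J 2
  rw [← X.sum_M] at hJ
  have h34 : X.M 2 * X.M 3 + X.M 2 * X.M 4
      = (X.c 2 2 0 : ℤ) • (X.M 3 + X.M 4) := by
    have expand : X.M 2 * (X.M 0 + X.M 1 + X.M 2 + X.M 3 + X.M 4)
        = X.M 2 * (X.M 0 + X.M 1 + X.M 2) + (X.M 2 * X.M 3 + X.M 2 * X.M 4) := by
      noncomm_ring
    rw [expand, X.M2_N1] at hJ
    have : (X.c 2 2 0 : ℤ) • ((X.M 0 + X.M 1 + X.M 2) + (X.M 3 + X.M 4))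
        = (X.c 2 2 0 : ℤ) • (X.M 0 + X.M 1 + X.M 2)
          + (X.c 2 2 0 : ℤ) • (X.M 3 + X.M 4) := by module
    have h2 : (X.c 2 2 0 : ℤ) • (X.M 0 + X.M 1 + X.M 2) + (X.M 2 * X.M 3 + X.M 2 * X.M 4)
        = (X.c 2 2 0 : ℤ) • (X.M 0 + X.M 1 + X.M 2)
          + (X.c 2 2 0 : ℤ) • (X.M 3 + X.M 4) := by
      rw [hJ]; module
    exact add_left_cancel h2
  rw [X.mulM5 2 3, X.mulM5 2 4,
    X.c_diag_zero (show (2:Fin 5) ≠ 3 by decide),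
    X.c_diag_zero (show (2:Fin 5) ≠ 4 by decide)] at h34
  have h2 : ((0:ℤ) + 0) • X.M 0 + ((X.c 2 3 1 : ℤ) + (X.c 2 4 1 : ℤ)) • X.M 1
      + ((X.c 2 3 2 : ℤ) + (X.c 2 4 2 : ℤ)) • X.M 2
      + ((X.c 2 3 3 : ℤ) + (X.c 2 4 3 : ℤ)) • X.M 3
      + ((X.c 2 3 4 : ℤ) + (X.c 2 4 4 : ℤ)) • X.M 4
      = (0:ℤ) • X.M 0 + (0:ℤ) • X.M 1 + (0:ℤ) • X.M 2
        + (X.c 2 2 0 : ℤ) • X.M 3 + (X.c 2 2 0 : ℤ) • X.M 4 := by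
    calc _ = (0:ℤ) • X.M 0 + (X.c 2 3 1 : ℤ) • X.M 1 + (X.c 2 3 2 : ℤ) • X.M 2
          + (X.c 2 3 3 : ℤ) • X.M 3 + (X.c 2 3 4 : ℤ) • X.M 4
          + ((0:ℤ) • X.M 0 + (X.c 2 4 1 : ℤ) • X.M 1 + (X.c 2 4 2 : ℤ) • X.M 2
            + (X.c 2 4 3 : ℤ) • X.M 3 + (X.c 2 4 4 : ℤ) • X.M 4) := by module
      _ = (X.c 2 2 0 : ℤ) • (X.M 3 + X.M 4) := h34
      _ = _ := by module
  obtain ⟨-, e1, e2, e3, e4⟩ := X.coeff5 h2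
  have a1 : (0:ℤ) ≤ (X.c 2 3 1 : ℤ) := Int.natCast_nonneg _
  have a2 : (0:ℤ) ≤ (X.c 2 4 1 : ℤ) := Int.natCast_nonneg _
  have a3 : (0:ℤ) ≤ (X.c 2 3 2 : ℤ) := Int.natCast_nonneg _
  have a4 : (0:ℤ) ≤ (X.c 2 4 2 : ℤ) := Int.natCast_nonneg _
  exact ⟨by linarith, by linarith, by linarith, by linarith, e3, e4⟩



set_option maxHeartbeats 1000000

include X in
lemma smul_J_inj {a b : ℤ}
    (h : a • (Matrix.of fun _ _ => (1:ℤ) : Matrix V V ℤ)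
       = b • (Matrix.of fun _ _ => (1:ℤ) : Matrix V V ℤ)) :
    a = b := by
  obtain ⟨x⟩ := X.nonempty
  have := congrFun (congrFun h x) x
  simpa using this

lemma N0_J : (X.M 0 + X.M 1) * (Matrix.of fun _ _ => (1:ℤ))
    = (1 + (X.c 1 1 0 : ℤ)) • (Matrix.of fun _ _ => (1:ℤ)) := by
  rw [add_mul, X.M0_mul, X.mul_J 1]; module

lemma N1_J : (X.M 0 + X.M 1 + X.M 2) * (Matrix.of fun _ _ => (1:ℤ))
    = (1 + (X.c 1 1 0 : ℤ) + (X.c 2 2 0 : ℤ)) • (Matrix.of fun _ _ => (1:ℤ)) := by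
  rw [add_mul, add_mul, X.M0_mul, X.mul_J 1, X.mul_J 2]; module

/-- `N0 * M3 = p' • (M3 + M4)` with `p' * (n3+n4) = (1+n1) * n3`. -/
lemma balanced0 : 1 + (X.c 1 3 3 : ℤ) = (X.c 1 3 4 : ℤ)
    ∧ (X.c 1 3 4 : ℤ) * ((X.c 3 3 0 : ℤ) + (X.c 4 4 0 : ℤ))
      = (1 + (X.c 1 1 0 : ℤ)) * (X.c 3 3 0 : ℤ) := by
  obtain ⟨z1, z2, z3, z4, s3, s4⟩ := X.cross1
  set n1 := (X.c 1 1 0 : ℤ) with hn1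
  set x3 := 1 + (X.c 1 3 3 : ℤ) with hx3
  set x4 := (X.c 1 3 4 : ℤ) with hx4
  have hc143 : (X.c 1 4 3 : ℤ) = 1 + n1 - x3 := by rw [hx3]; linarith
  have hc144 : (X.c 1 4 4 : ℤ) = n1 - x4 := by rw [hx4]; linarith
  have hA : (X.M 0 + X.M 1) * X.M 3 = x3 • X.M 3 + x4 • X.M 4 := by
    rw [add_mul, X.M0_mul, X.mulM5 1 3,
      X.c_diag_zero (show (1:Fin 5) ≠ 3 by decide), z1, z2, hx3, hx4]
    module
  have hB : (X.M 0 + X.M 1) * X.M 4 = (1 + n1 - x3) • X.M 3 + (1 + n1 - x4) • X.M 4 := by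
    rw [add_mul, X.M0_mul, X.mulM5 1 4,
      X.c_diag_zero (show (1:Fin 5) ≠ 4 by decide), z3, z4, hc143, hc144]
    module
  have hsq : (X.M 0 + X.M 1) * (X.M 0 + X.M 1)
      = (1 + n1) • (X.M 0 + X.M 1) := by
    have h := X.N0_sq; push_cast at h; exact h
  have hassoc : (X.M 0 + X.M 1) * ((X.M 0 + X.M 1) * X.M 3)
      = (1 + n1) • ((X.M 0 + X.M 1) * X.M 3) := by
    rw [← mul_assoc, hsq, smul_mul_assoc]
  rw [hA] at hassoc
  have hL : (X.M 0 + X.M 1) * (x3 • X.M 3 + x4 • X.M 4)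
      = x3 • ((X.M 0 + X.M 1) * X.M 3) + x4 • ((X.M 0 + X.M 1) * X.M 4) := by
    rw [mul_add, mul_smul_comm, mul_smul_comm]
  rw [hL, hA, hB] at hassoc
  have h2 : (0:ℤ) • X.M 0 + (0:ℤ) • X.M 1 + (0:ℤ) • X.M 2
      + (x3 * x3 + x4 * (1 + n1 - x3)) • X.M 3
      + (x3 * x4 + x4 * (1 + n1 - x4)) • X.M 4
      = (0:ℤ) • X.M 0 + (0:ℤ) • X.M 1 + (0:ℤ) • X.M 2
      + ((1 + n1) * x3) • X.M 3 + ((1 + n1) * x4) • X.M 4 := by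
    calc _ = x3 • (x3 • X.M 3 + x4 • X.M 4)
          + x4 • ((1 + n1 - x3) • X.M 3 + (1 + n1 - x4) • X.M 4) := by module
      _ = (1 + n1) • (x3 • X.M 3 + x4 • X.M 4) := hassoc
      _ = _ := by module
  obtain ⟨-, -, -, A3, A4⟩ := X.coeff5 h2
  -- valency relation, assuming x3 = x4 at the end
  have hval : x3 * (X.c 3 3 0 : ℤ) + x4 * (X.c 4 4 0 : ℤ)
      = (1 + n1) * (X.c 3 3 0 : ℤ) := by
    have hv1 : ((X.M 0 + X.M 1) * X.M 3) * (Matrix.of fun _ _ => (1:ℤ))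
        = ((1 + n1) * (X.c 3 3 0 : ℤ)) • (Matrix.of fun _ _ => (1:ℤ)) := by
      rw [mul_assoc, X.mul_J 3, mul_smul_comm, X.N0_J]; module
    rw [hA, add_mul, smul_mul_assoc, smul_mul_assoc, X.mul_J 3, X.mul_J 4] at hv1
    have hv2 : (x3 * (X.c 3 3 0 : ℤ) + x4 * (X.c 4 4 0 : ℤ))
          • (Matrix.of fun _ _ => (1:ℤ) : Matrix V V ℤ)
        = ((1 + n1) * (X.c 3 3 0 : ℤ)) • (Matrix.of fun _ _ => (1:ℤ) : Matrix V V ℤ) := by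
      rw [← hv1]; module
    exact X.smul_J_inj hv2
  have key : (x3 - x4) * (x3 - (1 + n1)) = 0 := by linear_combination A3
  have hx34 : x3 = x4 := by
    rcases mul_eq_zero.mp key with h | h
    · linarith [sub_eq_zero.mp h]
    · exfalso
      have hx3v : x3 = 1 + n1 := by linarith
      have A4' : x4 * (x3 - x4) = 0 := by linear_combination A4
      rcases mul_eq_zero.mp A4' with h4 | h4
      · -- x4 = 0 : radical violation for j = 3, T = {1}
        have hrad := X.radical 3 (by decide) {1} ⟨1, Finset.mem_singleton_self 1⟩ (by decide)
        apply hrad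
        constructor
        · have h := X.N0_sq
          rw [X.M_zero] at h
          push_cast at h
          simpa [Finset.sum_singleton] using h
        · have h := hA
          rw [hx3v, h4, X.M_zero] at h
          simp only [Finset.sum_singleton, Finset.sum_singleton]
          push_cast
          rw [h]; module
      · have h4' : x3 = x4 := by linarith [sub_eq_zero.mp h4]
        have : (0:ℤ) ≤ (X.c 1 4 4 : ℤ) := Int.natCast_nonneg _
        rw [hc144] at this
        omega
  refine ⟨hx34, ?_⟩
  rw [← hx34] at hval ⊢
  linear_combination hval



set_option maxHeartbeats 1000000

/-- `N1 * M3 = p • (M3 + M4)` with `p * (n3+n4) = (1+n1+n2) * n3`. -/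
lemma balanced1 : 1 + (X.c 1 3 3 : ℤ) + (X.c 2 3 3 : ℤ)
      = (X.c 1 3 4 : ℤ) + (X.c 2 3 4 : ℤ)
    ∧ ((X.c 1 3 4 : ℤ) + (X.c 2 3 4 : ℤ)) * ((X.c 3 3 0 : ℤ) + (X.c 4 4 0 : ℤ))
      = (1 + (X.c 1 1 0 : ℤ) + (X.c 2 2 0 : ℤ)) * (X.c 3 3 0 : ℤ) := by
  obtain ⟨z1, z2, z3, z4, s3, s4⟩ := X.cross1
  obtain ⟨w1, w2, w3, w4, u3, u4⟩ := X.cross2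
  set n1 := (X.c 1 1 0 : ℤ) with hn1
  set n2 := (X.c 2 2 0 : ℤ) with hn2
  set x3 := 1 + (X.c 1 3 3 : ℤ) + (X.c 2 3 3 : ℤ) with hx3
  set x4 := (X.c 1 3 4 : ℤ) + (X.c 2 3 4 : ℤ) with hx4
  have hA : (X.M 0 + X.M 1 + X.M 2) * X.M 3 = x3 • X.M 3 + x4 • X.M 4 := by
    rw [add_mul, add_mul, X.M0_mul, X.mulM5 1 3, X.mulM5 2 3,
      X.c_diag_zero (show (1:Fin 5) ≠ 3 by decide),
      X.c_diag_zero (show (2:Fin 5) ≠ 3 by decide), z1, z2, w1, w2, hx3, hx4]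
    module
  have hB : (X.M 0 + X.M 1 + X.M 2) * X.M 4
      = (1 + n1 + n2 - x3) • X.M 3 + (1 + n1 + n2 - x4) • X.M 4 := by
    have hcA : ((X.c 1 4 3 : ℤ) + (X.c 2 4 3 : ℤ)) = 1 + n1 + n2 - x3 := by
      rw [hx3]; linarith
    have hcB : (1 + ((X.c 1 4 4 : ℤ) + (X.c 2 4 4 : ℤ))) = 1 + n1 + n2 - x4 := by
      rw [hx4]; linarith
    have step : (X.M 0 + X.M 1 + X.M 2) * X.M 4
        = ((X.c 1 4 3 : ℤ) + (X.c 2 4 3 : ℤ)) • X.M 3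
          + (1 + ((X.c 1 4 4 : ℤ) + (X.c 2 4 4 : ℤ))) • X.M 4 := by
      rw [add_mul, add_mul, X.M0_mul, X.mulM5 1 4, X.mulM5 2 4,
        X.c_diag_zero (show (1:Fin 5) ≠ 4 by decide),
        X.c_diag_zero (show (2:Fin 5) ≠ 4 by decide), z3, z4, w3, w4]
      module
    rw [step, hcA, hcB]
  have hsq : (X.M 0 + X.M 1 + X.M 2) * (X.M 0 + X.M 1 + X.M 2)
      = (1 + n1 + n2) • (X.M 0 + X.M 1 + X.M 2) := by
    have h := X.N1_sq; push_cast at h; exact h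
  have hassoc : (X.M 0 + X.M 1 + X.M 2) * ((X.M 0 + X.M 1 + X.M 2) * X.M 3)
      = (1 + n1 + n2) • ((X.M 0 + X.M 1 + X.M 2) * X.M 3) := by
    rw [← mul_assoc, hsq, smul_mul_assoc]
  rw [hA] at hassoc
  have hL : (X.M 0 + X.M 1 + X.M 2) * (x3 • X.M 3 + x4 • X.M 4)
      = x3 • ((X.M 0 + X.M 1 + X.M 2) * X.M 3)
        + x4 • ((X.M 0 + X.M 1 + X.M 2) * X.M 4) := by
    rw [mul_add, mul_smul_comm, mul_smul_comm]
  rw [hL, hA, hB] at hassoc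
  have h2 : (0:ℤ) • X.M 0 + (0:ℤ) • X.M 1 + (0:ℤ) • X.M 2
      + (x3 * x3 + x4 * (1 + n1 + n2 - x3)) • X.M 3
      + (x3 * x4 + x4 * (1 + n1 + n2 - x4)) • X.M 4
      = (0:ℤ) • X.M 0 + (0:ℤ) • X.M 1 + (0:ℤ) • X.M 2
      + ((1 + n1 + n2) * x3) • X.M 3 + ((1 + n1 + n2) * x4) • X.M 4 := by
    calc _ = x3 • (x3 • X.M 3 + x4 • X.M 4)
          + x4 • ((1 + n1 + n2 - x3) • X.M 3 + (1 + n1 + n2 - x4) • X.M 4) := by module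
      _ = (1 + n1 + n2) • (x3 • X.M 3 + x4 • X.M 4) := hassoc
      _ = _ := by module
  obtain ⟨-, -, -, A3, A4⟩ := X.coeff5 h2
  have hval : x3 * (X.c 3 3 0 : ℤ) + x4 * (X.c 4 4 0 : ℤ)
      = (1 + n1 + n2) * (X.c 3 3 0 : ℤ) := by
    have hv1 : ((X.M 0 + X.M 1 + X.M 2) * X.M 3) * (Matrix.of fun _ _ => (1:ℤ))
        = ((1 + n1 + n2) * (X.c 3 3 0 : ℤ)) • (Matrix.of fun _ _ => (1:ℤ)) := by
      rw [mul_assoc, X.mul_J 3, mul_smul_comm, X.N1_J]; module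
    rw [hA, add_mul, smul_mul_assoc, smul_mul_assoc, X.mul_J 3, X.mul_J 4] at hv1
    have hv2 : (x3 * (X.c 3 3 0 : ℤ) + x4 * (X.c 4 4 0 : ℤ))
          • (Matrix.of fun _ _ => (1:ℤ) : Matrix V V ℤ)
        = ((1 + n1 + n2) * (X.c 3 3 0 : ℤ))
          • (Matrix.of fun _ _ => (1:ℤ) : Matrix V V ℤ) := by
      rw [← hv1]; module
    exact X.smul_J_inj hv2
  have key : (x3 - x4) * (x3 - (1 + n1 + n2)) = 0 := by linear_combination A3
  have hx34 : x3 = x4 := by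
    rcases mul_eq_zero.mp key with h | h
    · linarith [sub_eq_zero.mp h]
    · exfalso
      have hx3v : x3 = 1 + n1 + n2 := by linarith
      have A4' : x4 * (x3 - x4) = 0 := by linear_combination A4
      rcases mul_eq_zero.mp A4' with h4 | h4
      · -- x4 = 0 : radical violation for j = 3, T = {1, 2}
        have hrad := X.radical 3 (by decide) {1, 2}
          ⟨1, by decide⟩ (by decide)
        apply hrad
        have e : (1:Matrix V V ℤ) + ∑ t ∈ ({1, 2} : Finset (Fin 5)), X.M t
            = X.M 0 + X.M 1 + X.M 2 := by
          rw [Finset.sum_pair (show (1:Fin 5) ≠ 2 by decide), ← X.M_zero]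
          abel
        have esc : 1 + ∑ t ∈ ({1, 2} : Finset (Fin 5)), (X.c t t 0 : ℤ)
            = 1 + n1 + n2 := by
          rw [Finset.sum_pair (show (1:Fin 5) ≠ 2 by decide), ← hn1, ← hn2]
          ring
        rw [e, esc]
        constructor
        · exact hsq
        · rw [hA, hx3v, h4]; module
      · have h4' : x3 = x4 := by linarith [sub_eq_zero.mp h4]
        have k1 : (0:ℤ) ≤ (X.c 1 4 4 : ℤ) := Int.natCast_nonneg _
        have k2 : (0:ℤ) ≤ (X.c 2 4 4 : ℤ) := Int.natCast_nonneg _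
        have hn1p : 1 ≤ n1 := X.n_pos 1
        have hn2p : 1 ≤ n2 := X.n_pos 2
        -- x4 = x3 = 1+n1+n2 but c144 + c244 = n1 + n2 - x4 = -1 < 0
        have : (X.c 1 4 4 : ℤ) + (X.c 2 4 4 : ℤ) = n1 + n2 - x4 := by
          rw [hx4]; linarith
        rw [← h4', hx3v] at this
        linarith
  refine ⟨hx34, ?_⟩
  rw [← hx34] at hval ⊢
  linear_combination hval



set_option maxHeartbeats 1000000

lemma N1_M3 : (X.M 0 + X.M 1 + X.M 2) * X.M 3
    = ((X.c 1 3 4 : ℤ) + (X.c 2 3 4 : ℤ)) • (X.M 3 + X.M 4) := by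
  obtain ⟨z1, z2, -, -, -, -⟩ := X.cross1
  obtain ⟨w1, w2, -, -, -, -⟩ := X.cross2
  have B1 := X.balanced1.1
  have step : (X.M 0 + X.M 1 + X.M 2) * X.M 3
      = (1 + (X.c 1 3 3 : ℤ) + (X.c 2 3 3 : ℤ)) • X.M 3
        + ((X.c 1 3 4 : ℤ) + (X.c 2 3 4 : ℤ)) • X.M 4 := by
    rw [add_mul, add_mul, X.M0_mul, X.mulM5 1 3, X.mulM5 2 3,
      X.c_diag_zero (show (1:Fin 5) ≠ 3 by decide),
      X.c_diag_zero (show (2:Fin 5) ≠ 3 by decide), z1, z2, w1, w2]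
    module
  rw [step, B1]; module

lemma N1_M4 : (X.M 0 + X.M 1 + X.M 2) * X.M 4
    = (1 + (X.c 1 1 0 : ℤ) + (X.c 2 2 0 : ℤ)
        - ((X.c 1 3 4 : ℤ) + (X.c 2 3 4 : ℤ))) • (X.M 3 + X.M 4) := by
  obtain ⟨-, -, z3, z4, s3, s4⟩ := X.cross1
  obtain ⟨-, -, w3, w4, u3, u4⟩ := X.cross2
  have B1 := X.balanced1.1
  have step : (X.M 0 + X.M 1 + X.M 2) * X.M 4
      = ((X.c 1 4 3 : ℤ) + (X.c 2 4 3 : ℤ)) • X.M 3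
        + (1 + ((X.c 1 4 4 : ℤ) + (X.c 2 4 4 : ℤ))) • X.M 4 := by
    rw [add_mul, add_mul, X.M0_mul, X.mulM5 1 4, X.mulM5 2 4,
      X.c_diag_zero (show (1:Fin 5) ≠ 4 by decide),
      X.c_diag_zero (show (2:Fin 5) ≠ 4 by decide), z3, z4, w3, w4]
    module
  have hcA : ((X.c 1 4 3 : ℤ) + (X.c 2 4 3 : ℤ))
      = 1 + (X.c 1 1 0 : ℤ) + (X.c 2 2 0 : ℤ)
        - ((X.c 1 3 4 : ℤ) + (X.c 2 3 4 : ℤ)) := by linarith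
  have hcB : (1 + ((X.c 1 4 4 : ℤ) + (X.c 2 4 4 : ℤ)))
      = 1 + (X.c 1 1 0 : ℤ) + (X.c 2 2 0 : ℤ)
        - ((X.c 1 3 4 : ℤ) + (X.c 2 3 4 : ℤ)) := by linarith
  rw [step, hcA, hcB]; module

lemma M3_N1 : X.M 3 * (X.M 0 + X.M 1 + X.M 2) = (X.M 0 + X.M 1 + X.M 2) * X.M 3 := by
  rw [mul_add, mul_add, add_mul, add_mul, X.mul_comm' 3 0, X.mul_comm' 3 1,
    X.mul_comm' 3 2]

lemma M4_N1 : X.M 4 * (X.M 0 + X.M 1 + X.M 2) = (X.M 0 + X.M 1 + X.M 2) * X.M 4 := by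
  rw [mul_add, mul_add, add_mul, add_mul, X.mul_comm' 4 0, X.mul_comm' 4 1,
    X.mul_comm' 4 2]

lemma M34_coeffs :
    (X.c 3 4 1 : ℤ) = (X.c 3 3 0 : ℤ) - (X.c 3 3 1 : ℤ)
    ∧ (X.c 3 4 2 : ℤ) = (X.c 3 3 0 : ℤ) - (X.c 3 3 2 : ℤ)
    ∧ (X.c 3 4 3 : ℤ) = (X.c 3 3 0 : ℤ) - ((X.c 1 3 4 : ℤ) + (X.c 2 3 4 : ℤ))
        - (X.c 3 3 3 : ℤ)
    ∧ (X.c 3 4 4 : ℤ) = (X.c 3 3 0 : ℤ) - ((X.c 1 3 4 : ℤ) + (X.c 2 3 4 : ℤ))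
        - (X.c 3 3 4 : ℤ) := by
  have hJ3 := X.mul_J 3
  rw [← X.sum_M] at hJ3
  have expand : X.M 3 * (X.M 0 + X.M 1 + X.M 2 + X.M 3 + X.M 4)
      = X.M 3 * (X.M 0 + X.M 1 + X.M 2) + X.M 3 * X.M 3 + X.M 3 * X.M 4 := by
    noncomm_ring
  rw [expand, X.M3_N1, X.N1_M3, X.mulM5 3 3, X.mulM5 3 4] at hJ3
  set p := (X.c 1 3 4 : ℤ) + (X.c 2 3 4 : ℤ) with hp
  have h2 : ((X.c 3 3 0 : ℤ) + (X.c 3 4 0 : ℤ)) • X.M 0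
      + ((X.c 3 3 1 : ℤ) + (X.c 3 4 1 : ℤ)) • X.M 1
      + ((X.c 3 3 2 : ℤ) + (X.c 3 4 2 : ℤ)) • X.M 2
      + (p + (X.c 3 3 3 : ℤ) + (X.c 3 4 3 : ℤ)) • X.M 3
      + (p + (X.c 3 3 4 : ℤ) + (X.c 3 4 4 : ℤ)) • X.M 4
      = (X.c 3 3 0 : ℤ) • X.M 0 + (X.c 3 3 0 : ℤ) • X.M 1 + (X.c 3 3 0 : ℤ) • X.M 2
        + (X.c 3 3 0 : ℤ) • X.M 3 + (X.c 3 3 0 : ℤ) • X.M 4 := by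
    calc _ = p • (X.M 3 + X.M 4)
          + ((X.c 3 3 0 : ℤ) • X.M 0 + (X.c 3 3 1 : ℤ) • X.M 1 + (X.c 3 3 2 : ℤ) • X.M 2
            + (X.c 3 3 3 : ℤ) • X.M 3 + (X.c 3 3 4 : ℤ) • X.M 4)
          + ((X.c 3 4 0 : ℤ) • X.M 0 + (X.c 3 4 1 : ℤ) • X.M 1 + (X.c 3 4 2 : ℤ) • X.M 2
            + (X.c 3 4 3 : ℤ) • X.M 3 + (X.c 3 4 4 : ℤ) • X.M 4) := by module
      _ = (X.c 3 3 0 : ℤ) • (X.M 0 + X.M 1 + X.M 2 + X.M 3 + X.M 4) := hJ3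
      _ = _ := by module
  obtain ⟨e0, e1, e2, e3, e4⟩ := X.coeff5 h2
  exact ⟨by linarith, by linarith, by linarith, by linarith⟩

lemma M44_coeffs :
    (X.c 4 4 1 : ℤ) = (X.c 4 4 0 : ℤ) - (X.c 3 3 0 : ℤ) + (X.c 3 3 1 : ℤ)
    ∧ (X.c 4 4 2 : ℤ) = (X.c 4 4 0 : ℤ) - (X.c 3 3 0 : ℤ) + (X.c 3 3 2 : ℤ)
    ∧ (X.c 4 4 3 : ℤ) = (X.c 4 4 0 : ℤ) - (X.c 3 3 0 : ℤ)
        - (1 + (X.c 1 1 0 : ℤ) + (X.c 2 2 0 : ℤ))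
        + 2 * ((X.c 1 3 4 : ℤ) + (X.c 2 3 4 : ℤ)) + (X.c 3 3 3 : ℤ)
    ∧ (X.c 4 4 4 : ℤ) = (X.c 4 4 0 : ℤ) - (X.c 3 3 0 : ℤ)
        - (1 + (X.c 1 1 0 : ℤ) + (X.c 2 2 0 : ℤ))
        + 2 * ((X.c 1 3 4 : ℤ) + (X.c 2 3 4 : ℤ)) + (X.c 3 3 4 : ℤ) := by
  obtain ⟨f1, f2, f3, f4⟩ := X.M34_coeffs
  have hJ4 := X.mul_J 4
  rw [← X.sum_M] at hJ4
  have expand : X.M 4 * (X.M 0 + X.M 1 + X.M 2 + X.M 3 + X.M 4)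
      = X.M 4 * (X.M 0 + X.M 1 + X.M 2) + X.M 4 * X.M 3 + X.M 4 * X.M 4 := by
    noncomm_ring
  rw [expand, X.M4_N1, X.N1_M4, X.mul_comm' 4 3, X.mulM5 3 4, X.mulM5 4 4] at hJ4
  set q := 1 + (X.c 1 1 0 : ℤ) + (X.c 2 2 0 : ℤ)
      - ((X.c 1 3 4 : ℤ) + (X.c 2 3 4 : ℤ)) with hq
  have h2 : ((X.c 3 4 0 : ℤ) + (X.c 4 4 0 : ℤ)) • X.M 0
      + ((X.c 3 4 1 : ℤ) + (X.c 4 4 1 : ℤ)) • X.M 1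
      + ((X.c 3 4 2 : ℤ) + (X.c 4 4 2 : ℤ)) • X.M 2
      + (q + (X.c 3 4 3 : ℤ) + (X.c 4 4 3 : ℤ)) • X.M 3
      + (q + (X.c 3 4 4 : ℤ) + (X.c 4 4 4 : ℤ)) • X.M 4
      = (X.c 4 4 0 : ℤ) • X.M 0 + (X.c 4 4 0 : ℤ) • X.M 1 + (X.c 4 4 0 : ℤ) • X.M 2
        + (X.c 4 4 0 : ℤ) • X.M 3 + (X.c 4 4 0 : ℤ) • X.M 4 := by
    calc _ = q • (X.M 3 + X.M 4)
          + ((X.c 3 4 0 : ℤ) • X.M 0 + (X.c 3 4 1 : ℤ) • X.M 1 + (X.c 3 4 2 : ℤ) • X.M 2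
            + (X.c 3 4 3 : ℤ) • X.M 3 + (X.c 3 4 4 : ℤ) • X.M 4)
          + ((X.c 4 4 0 : ℤ) • X.M 0 + (X.c 4 4 1 : ℤ) • X.M 1 + (X.c 4 4 2 : ℤ) • X.M 2
            + (X.c 4 4 3 : ℤ) • X.M 3 + (X.c 4 4 4 : ℤ) • X.M 4) := by module
      _ = (X.c 4 4 0 : ℤ) • (X.M 0 + X.M 1 + X.M 2 + X.M 3 + X.M 4) := hJ4
      _ = _ := by module
  obtain ⟨e0, e1, e2, e3, e4⟩ := X.coeff5 h2
  refine ⟨by linarith, by linarith, by linarith, by linarith⟩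



set_option maxHeartbeats 1000000

lemma c233_eq : (X.c 2 3 3 : ℤ) = (X.c 2 3 4 : ℤ) := by
  have P1 := X.balanced0.1
  have B1 := X.balanced1.1
  linarith

lemma c234_s : (X.c 2 3 4 : ℤ) * ((X.c 3 3 0 : ℤ) + (X.c 4 4 0 : ℤ))
    = (X.c 2 2 0 : ℤ) * (X.c 3 3 0 : ℤ) := by
  have P2 := X.balanced0.2
  have B2 := X.balanced1.2
  linear_combination B2 - P2

lemma assoc13 (hc : X.c 3 3 3 = X.c 3 3 4) :
    (X.c 3 3 1 : ℤ) * (X.c 1 1 0 : ℤ) = ((X.c 1 3 4 : ℤ) - 1) * (X.c 3 3 0 : ℤ)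
    ∧ (X.c 3 3 2 : ℤ) * ((X.c 1 1 0 : ℤ) + 1) = (X.c 1 3 4 : ℤ) * (X.c 3 3 0 : ℤ)
    ∧ (X.c 3 3 3 : ℤ) * ((X.c 1 1 0 : ℤ) + 1)
      = (X.c 1 3 4 : ℤ) * ((X.c 3 3 0 : ℤ)
          - ((X.c 1 3 4 : ℤ) + (X.c 2 3 4 : ℤ))) := by
  obtain ⟨z1, z2, z3, z4, s3, s4⟩ := X.cross1
  obtain ⟨w1, w2, -, -, -, -⟩ := X.cross2
  have P1 := X.balanced0.1
  obtain ⟨f1, f2, f3, f4⟩ := X.M34_coeffs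
  have hccast : (X.c 3 3 4 : ℤ) = (X.c 3 3 3 : ℤ) := by exact_mod_cast hc.symm
  have hA : X.M 1 * (X.M 3 * X.M 3) = (X.M 1 * X.M 3) * X.M 3 :=
    (mul_assoc _ _ _).symm
  rw [X.mulM5 3 3] at hA
  have eL : X.M 1 * ((X.c 3 3 0 : ℤ) • X.M 0 + (X.c 3 3 1 : ℤ) • X.M 1
        + (X.c 3 3 2 : ℤ) • X.M 2 + (X.c 3 3 3 : ℤ) • X.M 3 + (X.c 3 3 4 : ℤ) • X.M 4)
      = (X.c 3 3 0 : ℤ) • (X.M 1 * X.M 0) + (X.c 3 3 1 : ℤ) • (X.M 1 * X.M 1)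
        + (X.c 3 3 2 : ℤ) • (X.M 1 * X.M 2) + (X.c 3 3 3 : ℤ) • (X.M 1 * X.M 3)
        + (X.c 3 3 4 : ℤ) • (X.M 1 * X.M 4) := by
    rw [mul_add, mul_add, mul_add, mul_add, mul_smul_comm, mul_smul_comm,
      mul_smul_comm, mul_smul_comm, mul_smul_comm]
  rw [eL, X.mul_M0, X.M1_sq, X.M1_M2, X.mulM5 1 3, X.mulM5 1 4] at hA
  have eR : ((X.c 1 3 0 : ℤ) • X.M 0 + (X.c 1 3 1 : ℤ) • X.M 1 + (X.c 1 3 2 : ℤ) • X.M 2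
        + (X.c 1 3 3 : ℤ) • X.M 3 + (X.c 1 3 4 : ℤ) • X.M 4) * X.M 3
      = (X.c 1 3 0 : ℤ) • (X.M 0 * X.M 3) + (X.c 1 3 1 : ℤ) • (X.M 1 * X.M 3)
        + (X.c 1 3 2 : ℤ) • (X.M 2 * X.M 3) + (X.c 1 3 3 : ℤ) • (X.M 3 * X.M 3)
        + (X.c 1 3 4 : ℤ) • (X.M 4 * X.M 3) := by
    rw [add_mul, add_mul, add_mul, add_mul, smul_mul_assoc, smul_mul_assoc,
      smul_mul_assoc, smul_mul_assoc, smul_mul_assoc]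
  rw [eR, X.M0_mul, X.mulM5 1 3, X.mulM5 2 3, X.mulM5 3 3, X.mul_comm' 4 3,
    X.mulM5 3 4] at hA
  rw [z1, z2, z3, z4, w1, w2, X.c_diag_zero (show (1:Fin 5) ≠ 3 by decide),
    X.c_diag_zero (show (1:Fin 5) ≠ 4 by decide),
    X.c_diag_zero (show (2:Fin 5) ≠ 3 by decide),
    X.c_diag_zero (show (3:Fin 5) ≠ 4 by decide)] at hA
  have key := sub_eq_zero_of_eq hA
  have h2 : ((X.c 3 3 1 : ℤ) * (X.c 1 1 0 : ℤ)) • X.M 0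
      + ((X.c 3 3 0 : ℤ) + (X.c 3 3 1 : ℤ) * ((X.c 1 1 0 : ℤ) - 1)) • X.M 1
      + ((X.c 3 3 2 : ℤ) * (X.c 1 1 0 : ℤ)) • X.M 2
      + ((X.c 3 3 3 : ℤ) * (X.c 1 3 3 : ℤ) + (X.c 3 3 4 : ℤ) * (X.c 1 4 3 : ℤ)) • X.M 3
      + ((X.c 3 3 3 : ℤ) * (X.c 1 3 4 : ℤ) + (X.c 3 3 4 : ℤ) * (X.c 1 4 4 : ℤ)) • X.M 4
      = ((X.c 1 3 3 : ℤ) * (X.c 3 3 0 : ℤ)) • X.M 0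
        + ((X.c 1 3 3 : ℤ) * (X.c 3 3 1 : ℤ) + (X.c 1 3 4 : ℤ) * (X.c 3 4 1 : ℤ)) • X.M 1
        + ((X.c 1 3 3 : ℤ) * (X.c 3 3 2 : ℤ) + (X.c 1 3 4 : ℤ) * (X.c 3 4 2 : ℤ)) • X.M 2
        + ((X.c 1 3 3 : ℤ) * (X.c 3 3 3 : ℤ) + (X.c 1 3 4 : ℤ) * (X.c 3 4 3 : ℤ)) • X.M 3
        + ((X.c 1 3 3 : ℤ) * (X.c 3 3 4 : ℤ) + (X.c 1 3 4 : ℤ) * (X.c 3 4 4 : ℤ)) • X.M 4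
      := by
    refine eq_of_sub_eq_zero ?_
    rw [← key]
    module
  obtain ⟨E0, E1, E2, E3, E4⟩ := X.coeff5 h2
  refine ⟨?_, ?_, ?_⟩
  · linear_combination E0 + (X.c 3 3 0 : ℤ) * P1
  · linear_combination E2 + (X.c 3 3 2 : ℤ) * P1 + (X.c 1 3 4 : ℤ) * f2
  · have e143 : (X.c 1 4 3 : ℤ) = (X.c 1 1 0 : ℤ) + 1 - (X.c 1 3 4 : ℤ) := by linarith
    rw [hccast, e143, f3] at E3
    linear_combination E3


set_option maxHeartbeats 1000000

include X in
lemma card_eq : Fintype.card V = 1 + X.c 1 1 0 + X.c 2 2 0 + X.c 3 3 0 + X.c 4 4 0 := by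
  obtain ⟨x⟩ := X.nonempty
  have key : (Fintype.card V : ℤ)
      = 1 + (X.c 1 1 0 : ℤ) + (X.c 2 2 0 : ℤ) + (X.c 3 3 0 : ℤ) + (X.c 4 4 0 : ℤ) := by
    have h1 : (Fintype.card V : ℤ) = ∑ _y : V, (1:ℤ) := by
      rw [Fintype.card_eq_sum_ones]
      push_cast
      rfl
    have h2 : ∑ _y : V, (1:ℤ)
        = ∑ y, (X.M 0 x y + X.M 1 x y + X.M 2 x y + X.M 3 x y + X.M 4 x y) :=
      Finset.sum_congr rfl fun y _ => (X.sum_entries x y).symm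
    have h0 : ∑ y, X.M 0 x y = 1 := by
      rw [X.M_zero]
      simp [Matrix.one_apply]
    rw [h1, h2]
    rw [Finset.sum_add_distrib, Finset.sum_add_distrib, Finset.sum_add_distrib,
      Finset.sum_add_distrib, h0, X.rowsum 1, X.rowsum 2, X.rowsum 3, X.rowsum 4]
  exact_mod_cast key

lemma N1_entry01 (x y : V) : (X.M 0 + X.M 1 + X.M 2) x y = 0
    ∨ (X.M 0 + X.M 1 + X.M 2) x y = 1 := by
  have h0 := X.M_entries 0 x y
  have h1 := X.M_entries 1 x y
  have h2 := X.M_entries 2 x y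
  have h3 := X.M_entries 3 x y
  have h4 := X.M_entries 4 x y
  have hs := X.sum_entries x y
  simp only [Matrix.add_apply]
  omega

lemma N1_diag (x : V) : (X.M 0 + X.M 1 + X.M 2) x x = 1 := by
  simp only [Matrix.add_apply]
  rw [X.diag_one, X.diag_zero (show (1:Fin 5) ≠ 0 by decide),
    X.diag_zero (show (2:Fin 5) ≠ 0 by decide)]
  ring

lemma N1_symm_apply (x y : V) : (X.M 0 + X.M 1 + X.M 2) y x
    = (X.M 0 + X.M 1 + X.M 2) x y := by
  simp only [Matrix.add_apply]
  rw [X.symm_apply 0 x y, X.symm_apply 1 x y, X.symm_apply 2 x y]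

lemma N1_entry_nonneg (x y : V) : 0 ≤ (X.M 0 + X.M 1 + X.M 2) x y := by
  rcases X.N1_entry01 x y with h | h <;> omega

lemma N1_rowsum (x : V) : ∑ y, (X.M 0 + X.M 1 + X.M 2) x y
    = 1 + (X.c 1 1 0 : ℤ) + (X.c 2 2 0 : ℤ) := by
  have h0 : ∑ y, X.M 0 x y = 1 := by
    rw [X.M_zero]; simp [Matrix.one_apply]
  simp only [Matrix.add_apply]
  rw [Finset.sum_add_distrib, Finset.sum_add_distrib, h0, X.rowsum 1, X.rowsum 2]

lemma N1_trans {x y z : V} (hxy : (X.M 0 + X.M 1 + X.M 2) x y = 1)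
    (hyz : (X.M 0 + X.M 1 + X.M 2) y z = 1) :
    (X.M 0 + X.M 1 + X.M 2) x z = 1 := by
  have hsq := congrFun (congrFun X.N1_sq x) z
  rw [Matrix.mul_apply, Matrix.smul_apply] at hsq
  have hpos : (0:ℤ) < ∑ w, (X.M 0 + X.M 1 + X.M 2) x w * (X.M 0 + X.M 1 + X.M 2) w z := by
    have hterm : (0:ℤ) < (X.M 0 + X.M 1 + X.M 2) x y * (X.M 0 + X.M 1 + X.M 2) y z := by
      rw [hxy, hyz]; norm_num
    have hle : (X.M 0 + X.M 1 + X.M 2) x y * (X.M 0 + X.M 1 + X.M 2) y z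
        ≤ ∑ w, (X.M 0 + X.M 1 + X.M 2) x w * (X.M 0 + X.M 1 + X.M 2) w z :=
      Finset.single_le_sum (fun w _ =>
        mul_nonneg (X.N1_entry_nonneg x w) (X.N1_entry_nonneg w z)) (Finset.mem_univ y)
    linarith
  rw [hsq] at hpos
  rcases X.N1_entry01 x z with h | h
  · rw [h] at hpos; simp at hpos
  · exact h

lemma class_size (x : V) :
    (Finset.univ.filter fun y => (X.M 0 + X.M 1 + X.M 2) x y = 1).card
      = 1 + X.c 1 1 0 + X.c 2 2 0 := by
  have key : ((Finset.univ.filter fun y => (X.M 0 + X.M 1 + X.M 2) x y = 1).card : ℤ)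
      = ∑ y, (X.M 0 + X.M 1 + X.M 2) x y := by
    rw [Finset.card_filter]
    push_cast
    refine Finset.sum_congr rfl fun y _ => ?_
    rcases X.N1_entry01 x y with h | h
    · rw [h]; simp [h]
    · rw [h]; simp [h]
  rw [X.N1_rowsum] at key
  exact_mod_cast key

lemma exists_m : ∃ m : ℕ, Fintype.card V = m * (1 + X.c 1 1 0 + X.c 2 2 0) := by
  classical
  let s : Setoid V := ⟨fun x y => (X.M 0 + X.M 1 + X.M 2) x y = 1,
    ⟨fun x => X.N1_diag x,
     fun {x y} h => by rw [X.N1_symm_apply]; exact h,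
     fun {x y z} h1 h2 => X.N1_trans h1 h2⟩⟩
  have key := (Fintype.card_congr (Equiv.sigmaFiberEquiv (Quotient.mk s))).symm
  rw [Fintype.card_sigma] at key
  have fib : ∀ q : Quotient s, Fintype.card {a // Quotient.mk s a = q}
      = 1 + X.c 1 1 0 + X.c 2 2 0 := by
    intro q
    induction q using Quotient.inductionOn with
    | h x =>
      rw [Fintype.card_subtype]
      have e : (Finset.univ.filter fun a => Quotient.mk s a = Quotient.mk s x)
          = Finset.univ.filter fun a => (X.M 0 + X.M 1 + X.M 2) x a = 1 := by
        ext a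
        simp only [Finset.mem_filter, Finset.mem_univ, true_and]
        rw [Quotient.eq]
        constructor
        · intro h
          have : (X.M 0 + X.M 1 + X.M 2) a x = 1 := h
          rw [← X.N1_symm_apply]; exact this
        · intro h
          show (X.M 0 + X.M 1 + X.M 2) a x = 1
          rw [X.N1_symm_apply]; exact h
      rw [e, X.class_size x]
  rw [Finset.sum_congr rfl (fun q _ => fib q), Finset.sum_const, smul_eq_mul] at key
  exact ⟨Fintype.card (Quotient s), key⟩


end HigmanianConfig
set_option maxHeartbeats 4000000 in
/-- under `c(3,3,3) = c(3,3,4)` and Eq. (1), for each `i ∈ {3,4}` the matrix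
`M2 + Mi` is the adjacency matrix of a divisible design graph with class matrix
`N1 = M0 + M1 + M2` and the stated parameters. -/
theorem higmanian_fusion_ddg_eq1 {V : Type*} [Fintype V] [DecidableEq V]
    (X : HigmanianConfig V)
    (hc : X.c 3 3 3 = X.c 3 3 4)
    (heq : 1 / (X.n 3 : ℚ) + 1 / (X.n 4 : ℚ)
        = 1 / (X.n 1 : ℚ) - 1 / ((X.n 1 : ℚ) + 1)) :
    ∀ i j : Fin 5, ((i = 3 ∧ j = 4) ∨ (i = 4 ∧ j = 3)) →
    ∃ l1 l2 m : ℕ,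
      (l1 : ℚ) = (X.n 2 : ℚ)
          + (X.n i : ℚ) * ((X.n 1 : ℚ) * (X.n i : ℚ) - (X.n j : ℚ))
            / ((X.n 1 : ℚ) * ((X.n 3 : ℚ) + (X.n 4 : ℚ))) ∧
      (l2 : ℚ) = 2 * (X.n 2 : ℚ) * (X.n i : ℚ) / ((X.n 3 : ℚ) + (X.n 4 : ℚ))
          + (X.n i : ℚ) ^ 2 * ((X.n 3 : ℚ) + (X.n 4 : ℚ) - (X.n 2 : ℚ) - (X.n 1 : ℚ) - 1)
            / ((X.n 3 : ℚ) + (X.n 4 : ℚ)) ^ 2 ∧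
      (m : ℚ) = 1 + ((X.n 3 : ℚ) + (X.n 4 : ℚ)) / (1 + (X.n 1 : ℚ) + (X.n 2 : ℚ)) ∧
      Fintype.card V = 1 + X.n 1 + X.n 2 + X.n 3 + X.n 4 ∧
      m * (1 + X.n 1 + X.n 2) = Fintype.card V ∧
      (X.M 2 + X.M i)ᵀ = X.M 2 + X.M i ∧
      (∀ x y, (X.M 2 + X.M i) x y = 0 ∨ (X.M 2 + X.M i) x y = 1) ∧
      (∀ x, (X.M 2 + X.M i) x x = 0) ∧
      (X.M 0 + X.M 1 + X.M 2)ᵀ = X.M 0 + X.M 1 + X.M 2 ∧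
      (∀ x y, (X.M 0 + X.M 1 + X.M 2) x y = 0 ∨ (X.M 0 + X.M 1 + X.M 2) x y = 1) ∧
      (∀ x, (X.M 0 + X.M 1 + X.M 2) x x = 1) ∧
      (X.M 0 + X.M 1 + X.M 2) * (X.M 0 + X.M 1 + X.M 2)
          = ((1 + X.n 1 + X.n 2 : ℕ) : ℤ) • (X.M 0 + X.M 1 + X.M 2) ∧
      (X.M 2 + X.M i) * (X.M 2 + X.M i)
          = ((X.n 2 + X.n i : ℕ) : ℤ) • (1 : Matrix V V ℤ)
            + (l1 : ℤ) • ((X.M 0 + X.M 1 + X.M 2) - 1)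
            + (l2 : ℤ) • ((Matrix.of fun _ _ => (1 : ℤ)) - (X.M 0 + X.M 1 + X.M 2)) := by
  simp only [HigmanianConfig.n] at heq ⊢
  obtain ⟨z1, z2, z3, z4, s3, s4⟩ := X.cross1
  obtain ⟨w1, w2, w3, w4, u3, u4⟩ := X.cross2
  have P1 := X.balanced0.1
  have P2 := X.balanced0.2
  have pS := X.balanced1.2
  have c23 := X.c233_eq
  have c2s := X.c234_s
  obtain ⟨Q0, Q2, Q3⟩ := X.assoc13 hc
  obtain ⟨f1, f2, f3, f4⟩ := X.M34_coeffs
  obtain ⟨g1, g2, g3, g4⟩ := X.M44_coeffs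
  have hccast : (X.c 3 3 4 : ℤ) = (X.c 3 3 3 : ℤ) := by exact_mod_cast hc.symm
  have hn1p := X.n_pos 1
  have hn2p := X.n_pos 2
  have hn3p := X.n_pos 3
  have hn4p := X.n_pos 4
  have hn1N : 1 ≤ X.c 1 1 0 := by exact_mod_cast hn1p
  have hn2N : 1 ≤ X.c 2 2 0 := by exact_mod_cast hn2p
  have hn3N : 1 ≤ X.c 3 3 0 := by exact_mod_cast hn3p
  have hn4N : 1 ≤ X.c 4 4 0 := by exact_mod_cast hn4p
  have hq1 : (X.c 1 1 0 : ℚ) ≠ 0 := by positivity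
  have hq1' : (X.c 1 1 0 : ℚ) + 1 ≠ 0 := by positivity
  have hqs : (X.c 3 3 0 : ℚ) + (X.c 4 4 0 : ℚ) ≠ 0 := by positivity
  have hqd : (X.c 1 1 0 : ℚ) * ((X.c 3 3 0 : ℚ) + (X.c 4 4 0 : ℚ)) ≠ 0 := by positivity
  have hqs2 : ((X.c 3 3 0 : ℚ) + (X.c 4 4 0 : ℚ)) ^ 2 ≠ 0 := pow_ne_zero 2 hqs
  have hqn : 1 + (X.c 1 1 0 : ℚ) + (X.c 2 2 0 : ℚ) ≠ 0 := by positivity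
  -- integer form of Eq. (1)
  have heqZ : (X.c 3 3 0 : ℤ) * (X.c 4 4 0 : ℤ)
      = (X.c 1 1 0 : ℤ) * ((X.c 1 1 0 : ℤ) + 1)
        * ((X.c 3 3 0 : ℤ) + (X.c 4 4 0 : ℤ)) := by
    have hq3 : (X.c 3 3 0 : ℚ) ≠ 0 := by positivity
    have hq4 : (X.c 4 4 0 : ℚ) ≠ 0 := by positivity
    have key : (X.c 3 3 0 : ℚ) * (X.c 4 4 0 : ℚ)
        = (X.c 1 1 0 : ℚ) * ((X.c 1 1 0 : ℚ) + 1)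
          * ((X.c 3 3 0 : ℚ) + (X.c 4 4 0 : ℚ)) := by
      field_simp at heq
      linear_combination -heq
    exact_mod_cast key
  -- main derived integer identities
  have has : (X.c 3 3 1 : ℤ) * ((X.c 1 1 0 : ℤ) * ((X.c 3 3 0 : ℤ) + (X.c 4 4 0 : ℤ)))
      = (X.c 3 3 0 : ℤ) * ((X.c 1 1 0 : ℤ) * (X.c 3 3 0 : ℤ) - (X.c 4 4 0 : ℤ)) := by
    linear_combination ((X.c 3 3 0 : ℤ) + (X.c 4 4 0 : ℤ)) * Q0 + (X.c 3 3 0 : ℤ) * P2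
  have hne11 : ((X.c 1 1 0 : ℤ) + 1) ≠ 0 := by linarith
  have hnsne : (X.c 1 1 0 : ℤ) * ((X.c 3 3 0 : ℤ) + (X.c 4 4 0 : ℤ)) ≠ 0 := by
    have h1 : (0:ℤ) < X.c 1 1 0 := by linarith
    have h2 : (0:ℤ) < (X.c 3 3 0 : ℤ) + (X.c 4 4 0 : ℤ) := by linarith
    exact ne_of_gt (mul_pos h1 h2)
  have hbs : ((X.c 1 1 0 : ℤ) + 1)
        * ((X.c 3 3 2 : ℤ) * ((X.c 3 3 0 : ℤ) + (X.c 4 4 0 : ℤ)))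
      = ((X.c 1 1 0 : ℤ) + 1) * ((X.c 3 3 0 : ℤ) * (X.c 3 3 0 : ℤ)) := by
    linear_combination ((X.c 3 3 0 : ℤ) + (X.c 4 4 0 : ℤ)) * Q2 + (X.c 3 3 0 : ℤ) * P2
  have hbs' : (X.c 3 3 2 : ℤ) * ((X.c 3 3 0 : ℤ) + (X.c 4 4 0 : ℤ))
      = (X.c 3 3 0 : ℤ) * (X.c 3 3 0 : ℤ) := mul_left_cancel₀ hne11 hbs
  have S1 : (X.c 3 3 2 : ℤ) = (X.c 3 3 1 : ℤ) + ((X.c 1 1 0 : ℤ) + 1) := by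
    apply mul_left_cancel₀ hnsne
    linear_combination (X.c 1 1 0 : ℤ) * hbs' - has + heqZ
  have hts : (X.c 3 3 3 : ℤ)
        * (((X.c 3 3 0 : ℤ) + (X.c 4 4 0 : ℤ)) * ((X.c 3 3 0 : ℤ) + (X.c 4 4 0 : ℤ)))
      = (X.c 3 3 0 : ℤ) * (X.c 3 3 0 : ℤ)
        * ((X.c 3 3 0 : ℤ) + (X.c 4 4 0 : ℤ) - 1 - (X.c 1 1 0 : ℤ) - (X.c 2 2 0 : ℤ)) := by
    apply mul_left_cancel₀ hne11
    linear_combination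
      (((X.c 3 3 0 : ℤ) + (X.c 4 4 0 : ℤ)) * ((X.c 3 3 0 : ℤ) + (X.c 4 4 0 : ℤ))) * Q3
      + (((X.c 3 3 0 : ℤ) + (X.c 4 4 0 : ℤ)) * (X.c 3 3 0 : ℤ)
          - (1 + (X.c 1 1 0 : ℤ) + (X.c 2 2 0 : ℤ)) * (X.c 3 3 0 : ℤ)) * P2
      - ((X.c 3 3 0 : ℤ) + (X.c 4 4 0 : ℤ)) * (X.c 1 3 4 : ℤ) * pS
  have ht4 : (X.c 4 4 4 : ℤ)
        * (((X.c 3 3 0 : ℤ) + (X.c 4 4 0 : ℤ)) * ((X.c 3 3 0 : ℤ) + (X.c 4 4 0 : ℤ)))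
      = (X.c 4 4 0 : ℤ) * (X.c 4 4 0 : ℤ)
        * ((X.c 3 3 0 : ℤ) + (X.c 4 4 0 : ℤ) - 1 - (X.c 1 1 0 : ℤ) - (X.c 2 2 0 : ℤ)) := by
    linear_combination
      (((X.c 3 3 0 : ℤ) + (X.c 4 4 0 : ℤ)) * ((X.c 3 3 0 : ℤ) + (X.c 4 4 0 : ℤ))) * g4
      + (((X.c 3 3 0 : ℤ) + (X.c 4 4 0 : ℤ)) * ((X.c 3 3 0 : ℤ) + (X.c 4 4 0 : ℤ))) * hccast
      + 2 * ((X.c 3 3 0 : ℤ) + (X.c 4 4 0 : ℤ)) * pS + hts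
  have hc243 : (X.c 2 4 3 : ℤ) = (X.c 2 4 4 : ℤ) := by linarith
  have hc244s : (X.c 2 4 4 : ℤ) * ((X.c 3 3 0 : ℤ) + (X.c 4 4 0 : ℤ))
      = (X.c 2 2 0 : ℤ) * (X.c 4 4 0 : ℤ) := by
    linear_combination ((X.c 3 3 0 : ℤ) + (X.c 4 4 0 : ℤ)) * u4 - c2s
  have hZ4 : (X.c 4 4 1 : ℤ) * ((X.c 1 1 0 : ℤ) * ((X.c 3 3 0 : ℤ) + (X.c 4 4 0 : ℤ)))
      = (X.c 4 4 0 : ℤ) * ((X.c 1 1 0 : ℤ) * (X.c 4 4 0 : ℤ) - (X.c 3 3 0 : ℤ)) := by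
    linear_combination ((X.c 1 1 0 : ℤ) * ((X.c 3 3 0 : ℤ) + (X.c 4 4 0 : ℤ))) * g1 + has
  -- cast-to-ℚ equalities
  have e221 : (X.c 2 2 1 : ℚ) = (X.c 2 2 0 : ℚ) := by exact_mod_cast X.c221_eq
  obtain ⟨m, hm⟩ := X.exists_m
  have hmn : m * (1 + X.c 1 1 0 + X.c 2 2 0)
      = 1 + X.c 1 1 0 + X.c 2 2 0 + X.c 3 3 0 + X.c 4 4 0 := hm.symm.trans X.card_eq
  have hmq : (m : ℚ) = 1 + ((X.c 3 3 0 : ℚ) + (X.c 4 4 0 : ℚ))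
      / (1 + (X.c 1 1 0 : ℚ) + (X.c 2 2 0 : ℚ)) := by
    have hmZ : (m : ℚ) * (1 + (X.c 1 1 0 : ℚ) + (X.c 2 2 0 : ℚ))
        = 1 + (X.c 1 1 0 : ℚ) + (X.c 2 2 0 : ℚ) + (X.c 3 3 0 : ℚ) + (X.c 4 4 0 : ℚ) := by
      exact_mod_cast hmn
    field_simp
    linear_combination hmZ
  intro i j hij
  rcases hij with ⟨hi, hj⟩ | ⟨hi, hj⟩
  · subst hi; subst hj
    refine ⟨X.c 2 2 1 + X.c 3 3 1, X.c 2 3 3 + X.c 2 3 4 + X.c 3 3 3, m,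
      ?_, ?_, hmq, X.card_eq, hm.symm, ?_, ?_, ?_, ?_, ?_, ?_, X.N1_sq, ?_⟩
    · -- l1 rational formula
      push_cast
      have e1 : (X.c 3 3 1 : ℚ)
          = (X.c 3 3 0 : ℚ) * ((X.c 1 1 0 : ℚ) * (X.c 3 3 0 : ℚ) - (X.c 4 4 0 : ℚ))
            / ((X.c 1 1 0 : ℚ) * ((X.c 3 3 0 : ℚ) + (X.c 4 4 0 : ℚ))) := by
        rw [eq_div_iff hqd]
        exact_mod_cast has
      rw [e221, e1]
    · -- l2 rational formula
      push_cast
      have e23q : (X.c 2 3 3 : ℚ) = (X.c 2 3 4 : ℚ) := by exact_mod_cast c23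
      have e234 : (X.c 2 3 4 : ℚ)
          = (X.c 2 2 0 : ℚ) * (X.c 3 3 0 : ℚ) / ((X.c 3 3 0 : ℚ) + (X.c 4 4 0 : ℚ)) := by
        rw [eq_div_iff hqs]
        exact_mod_cast c2s
      have e333 : (X.c 3 3 3 : ℚ)
          = (X.c 3 3 0 : ℚ) ^ 2 * ((X.c 3 3 0 : ℚ) + (X.c 4 4 0 : ℚ) - (X.c 2 2 0 : ℚ)
              - (X.c 1 1 0 : ℚ) - 1) / ((X.c 3 3 0 : ℚ) + (X.c 4 4 0 : ℚ)) ^ 2 := by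
        rw [eq_div_iff hqs2]
        have qts : (X.c 3 3 3 : ℚ)
            * (((X.c 3 3 0 : ℚ) + (X.c 4 4 0 : ℚ)) * ((X.c 3 3 0 : ℚ) + (X.c 4 4 0 : ℚ)))
            = (X.c 3 3 0 : ℚ) * (X.c 3 3 0 : ℚ)
              * ((X.c 3 3 0 : ℚ) + (X.c 4 4 0 : ℚ) - 1 - (X.c 1 1 0 : ℚ)
                - (X.c 2 2 0 : ℚ)) := by exact_mod_cast hts
        linear_combination qts
      rw [e23q, e234, e333]
      ring
    · rw [Matrix.transpose_add, X.M_symm, X.M_symm]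
    · intro x y
      have h0 := X.M_entries 0 x y
      have h1 := X.M_entries 1 x y
      have h2 := X.M_entries 2 x y
      have h3 := X.M_entries 3 x y
      have h4 := X.M_entries 4 x y
      have hs := X.sum_entries x y
      simp only [Matrix.add_apply]
      omega
    · intro x
      simp only [Matrix.add_apply]
      rw [X.diag_zero (show (2:Fin 5) ≠ 0 by decide),
        X.diag_zero (show (3:Fin 5) ≠ 0 by decide)]
      ring
    · rw [Matrix.transpose_add, Matrix.transpose_add, X.M_symm, X.M_symm, X.M_symm]
    · exact X.N1_entry01
    · exact X.N1_diag
    · -- the DDG equation for i = 3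
      have hM23 : X.M 2 * X.M 3 = (X.c 2 3 4 : ℤ) • X.M 3 + (X.c 2 3 4 : ℤ) • X.M 4 := by
        rw [X.mulM5 2 3, X.c_diag_zero (show (2:Fin 5) ≠ 3 by decide), w1, w2, c23]
        module
      have ex : (X.M 2 + X.M 3) * (X.M 2 + X.M 3)
          = X.M 2 * X.M 2 + X.M 2 * X.M 3 + X.M 3 * X.M 2 + X.M 3 * X.M 3 := by
        noncomm_ring
      rw [ex, X.mul_comm' 3 2, hM23, X.M2_sq, X.mulM5 3 3, hccast, S1,
        ← X.sum_M, ← X.M_zero]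
      push_cast
      rw [X.c221_eq, c23]
      module
  · subst hi; subst hj
    refine ⟨X.c 2 2 1 + X.c 4 4 1, X.c 2 4 3 + X.c 2 4 4 + X.c 4 4 4, m,
      ?_, ?_, hmq, X.card_eq, hm.symm, ?_, ?_, ?_, ?_, ?_, ?_, X.N1_sq, ?_⟩
    · push_cast
      have e1 : (X.c 4 4 1 : ℚ)
          = (X.c 4 4 0 : ℚ) * ((X.c 1 1 0 : ℚ) * (X.c 4 4 0 : ℚ) - (X.c 3 3 0 : ℚ))
            / ((X.c 1 1 0 : ℚ) * ((X.c 3 3 0 : ℚ) + (X.c 4 4 0 : ℚ))) := by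
        rw [eq_div_iff hqd]
        exact_mod_cast hZ4
      rw [e221, e1]
    · push_cast
      have e243q : (X.c 2 4 3 : ℚ) = (X.c 2 4 4 : ℚ) := by exact_mod_cast hc243
      have e244 : (X.c 2 4 4 : ℚ)
          = (X.c 2 2 0 : ℚ) * (X.c 4 4 0 : ℚ) / ((X.c 3 3 0 : ℚ) + (X.c 4 4 0 : ℚ)) := by
        rw [eq_div_iff hqs]
        exact_mod_cast hc244s
      have e444 : (X.c 4 4 4 : ℚ)
          = (X.c 4 4 0 : ℚ) ^ 2 * ((X.c 3 3 0 : ℚ) + (X.c 4 4 0 : ℚ) - (X.c 2 2 0 : ℚ)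
              - (X.c 1 1 0 : ℚ) - 1) / ((X.c 3 3 0 : ℚ) + (X.c 4 4 0 : ℚ)) ^ 2 := by
        rw [eq_div_iff hqs2]
        have qt4 : (X.c 4 4 4 : ℚ)
            * (((X.c 3 3 0 : ℚ) + (X.c 4 4 0 : ℚ)) * ((X.c 3 3 0 : ℚ) + (X.c 4 4 0 : ℚ)))
            = (X.c 4 4 0 : ℚ) * (X.c 4 4 0 : ℚ)
              * ((X.c 3 3 0 : ℚ) + (X.c 4 4 0 : ℚ) - 1 - (X.c 1 1 0 : ℚ)
                - (X.c 2 2 0 : ℚ)) := by exact_mod_cast ht4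
        linear_combination qt4
      rw [e243q, e244, e444]
      ring
    · rw [Matrix.transpose_add, X.M_symm, X.M_symm]
    · intro x y
      have h0 := X.M_entries 0 x y
      have h1 := X.M_entries 1 x y
      have h2 := X.M_entries 2 x y
      have h3 := X.M_entries 3 x y
      have h4 := X.M_entries 4 x y
      have hs := X.sum_entries x y
      simp only [Matrix.add_apply]
      omega
    · intro x
      simp only [Matrix.add_apply]
      rw [X.diag_zero (show (2:Fin 5) ≠ 0 by decide),
        X.diag_zero (show (4:Fin 5) ≠ 0 by decide)]
      ring
    · rw [Matrix.transpose_add, Matrix.transpose_add, X.M_symm, X.M_symm, X.M_symm]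
    · exact X.N1_entry01
    · exact X.N1_diag
    · -- the DDG equation for i = 4
      have hM24 : X.M 2 * X.M 4 = (X.c 2 4 4 : ℤ) • X.M 3 + (X.c 2 4 4 : ℤ) • X.M 4 := by
        rw [X.mulM5 2 4, X.c_diag_zero (show (2:Fin 5) ≠ 4 by decide), w3, w4, hc243]
        module
      have ex : (X.M 2 + X.M 4) * (X.M 2 + X.M 4)
          = X.M 2 * X.M 2 + X.M 2 * X.M 4 + X.M 4 * X.M 2 + X.M 4 * X.M 4 := by
        noncomm_ring
      rw [ex, X.mul_comm' 4 2, hM24, X.M2_sq, X.mulM5 4 4, ← X.sum_M, ← X.M_zero]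
      push_cast
      rw [X.c221_eq, g1, g2, g3, g4, hccast, S1, hc243]
      module
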